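/- arXiv:1901.05776 — 6 statements merged into one kernel-verified Lean document; each statement's English description precedes it below -/
import Mathlib

section
/- Let F : ℝ³ → ℝ be convex and differentiable with gradient f := ∇F, and suppose: F(0) = 0 and F(u) > 0 for all u ≠ 0; F(u)/|u|² → ∞ as |u| → ∞; ⟨f(u),u⟩ ≥ 2·F(u) for all u ∈ ℝ³; and whenever u, v ∈ ℝ³ satisfy ⟨f(u),v⟩ = ⟨f(v),u⟩ > 0 one has F(u) − F(v) ≤ (⟨f(u),u⟩² − ⟨f(u),v⟩²)/(2⟨f(u),u⟩). Then for all u, ψ ∈ ℝ³ and all t ≥ 0: ⟨f(u), ((t² − 1)/2)·u + t·ψ⟩ + F(u) − F(t·u + ψ) ≤ 0. -/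
open Filter
open scoped RealInnerProductSpace

set_option maxHeartbeats 1600000 in
theorem stmt2 (F : EuclideanSpace ℝ (Fin 3) → ℝ)
    (f : EuclideanSpace ℝ (Fin 3) → EuclideanSpace ℝ (Fin 3))
    (hconv : ConvexOn ℝ Set.univ F)
    (hgrad : ∀ u, HasGradientAt F (f u) u)
    (hF0 : F 0 = 0) (hFpos : ∀ u, u ≠ 0 → 0 < F u)
    (hsuperquad : ∀ M : ℝ, ∃ R : ℝ, ∀ u : EuclideanSpace ℝ (Fin 3),
      R ≤ ‖u‖ → M ≤ F u / ‖u‖ ^ 2)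
    (hF4 : ∀ u, 2 * F u ≤ ⟪f u, u⟫)
    (hF5 : ∀ u v, ⟪f u, v⟫ = ⟪f v, u⟫ → 0 < ⟪f u, v⟫ →
      F u - F v ≤ (⟪f u, u⟫ ^ 2 - ⟪f u, v⟫ ^ 2) / (2 * ⟪f u, u⟫)) :
    ∀ (u ψ : EuclideanSpace ℝ (Fin 3)) (t : ℝ), 0 ≤ t →
      ⟪f u, ((t ^ 2 - 1) / 2) • u + t • ψ⟫ + F u - F (t • u + ψ) ≤ 0 := by
  intro u ψ t ht
  have hFnn : ∀ v, 0 ≤ F v := by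
    intro v
    rcases eq_or_ne v 0 with h | h
    · simp [h, hF0]
    · exact (hFpos v h).le
  rcases eq_or_ne u 0 with hu | hu
  · -- u = 0 : f 0 = 0 since 0 is a global minimum
    have hmin : IsLocalMin F 0 := by
      apply IsMinOn.isLocalMin (s := Set.univ) _ Filter.univ_mem
      intro v _
      simpa [hF0] using hFnn v
    have hf0 : f 0 = 0 := by
      have h1 := hmin.hasFDerivAt_eq_zero (hgrad 0).hasFDerivAt
      have h2 := congrArg (fun L => (InnerProductSpace.toDual ℝ
        (EuclideanSpace ℝ (Fin 3))).symm L) h1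
      simpa using h2
    subst hu
    have : F (t • (0 : EuclideanSpace ℝ (Fin 3)) + ψ) = F ψ := by simp
    rw [this, hf0]
    simp only [inner_zero_left]
    linarith [hFnn ψ]
  · -- u ≠ 0
    have hα : 0 < ⟪f u, u⟫ := lt_of_lt_of_le (by linarith [hFpos u hu]) (hF4 u)
    set α := ⟪f u, u⟫ with hαdef
    set c := ⟪f u, ψ⟫ with hcdef
    have hinner : ∀ a b : ℝ, ⟪f u, a • u + b • ψ⟫ = a * α + b * c := by
      intro a b
      rw [inner_add_right, real_inner_smul_right, real_inner_smul_right]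
    set h : ℝ → ℝ := fun s => F (s • u + ψ) - F u - ((s ^ 2 - 1) / 2 * α + s * c)
      with hhdef
    suffices hgoal : 0 ≤ h t by
      have h1 : ⟪f u, ((t ^ 2 - 1) / 2) • u + t • ψ⟫ = (t ^ 2 - 1) / 2 * α + t * c :=
        hinner _ _
      have h2 : h t = F (t • u + ψ) - F u - ((t ^ 2 - 1) / 2 * α + t * c) := by
        rw [hhdef]
      rw [h1]
      linarith [hgoal, h2 ▸ hgoal]
    -- derivative of h
    have hline : ∀ s : ℝ, HasDerivAt (fun s : ℝ => s • u + ψ) u s := by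
      intro s
      simpa using ((hasDerivAt_id s).smul_const u).add_const ψ
    have hF' : ∀ s : ℝ, HasDerivAt (fun s : ℝ => F (s • u + ψ)) ⟪f (s • u + ψ), u⟫ s := by
      intro s
      have := ((hgrad (s • u + ψ)).hasFDerivAt).comp_hasDerivAt s (hline s)
      simpa [InnerProductSpace.toDual_apply_apply, Function.comp_def] using this
    have hq : ∀ s : ℝ, HasDerivAt (fun s : ℝ => (s ^ 2 - 1) / 2 * α + s * c)
        (s * α + c) s := by
      intro s
      have h1 : HasDerivAt (fun s : ℝ => (s ^ 2 - 1) / 2 * α + s * c)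
          (((2 : ℕ) * s ^ 1) / 2 * α + 1 * c) s :=
        ((((hasDerivAt_pow 2 s).sub_const 1).div_const 2).mul_const α).add
          ((hasDerivAt_id s).mul_const c)
      convert h1 using 1
      push_cast
      ring
    have hd : ∀ s : ℝ, HasDerivAt h (⟪f (s • u + ψ), u⟫ - (s * α + c)) s := by
      intro s
      exact ((hF' s).sub_const (F u)).sub (hq s)
    have hcont : Continuous h := continuous_iff_continuousAt.2 fun s => (hd s).continuousAt
    -- h 0 ≥ 0
    have h0val : h 0 = F ψ - F u - ((0 ^ 2 - 1) / 2 * α + 0 * c) := by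
      rw [hhdef]; simp
    have h0 : 0 ≤ h 0 := by
      rw [h0val]
      nlinarith [hFnn ψ, hF4 u]
    -- gradient convexity inequality not needed; endpoint T
    have hnu : 0 < ‖u‖ := norm_pos_iff.2 hu
    obtain ⟨M, hM⟩ : ∃ M : ℝ, M = (α / 2 + 1) / ‖u‖ ^ 2 := ⟨_, rfl⟩
    have hMu : M * ‖u‖ ^ 2 = α / 2 + 1 := by
      rw [hM]; exact div_mul_cancel₀ _ (by positivity)
    have hMpos : 0 < M := by
      rw [hM]; positivity
    obtain ⟨R, hR⟩ := hsuperquad M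
    obtain ⟨B, hB⟩ : ∃ B : ℝ, B = 2 * M * ‖u‖ * ‖ψ‖ + c := ⟨_, rfl⟩
    obtain ⟨D, hD⟩ : ∃ D : ℝ, D = M * ‖ψ‖ ^ 2 + α / 2 - F u := ⟨_, rfl⟩
    obtain ⟨T, hT1, hTt, hTR⟩ : ∃ T : ℝ, 1 + |B| + |D| ≤ T ∧ t + 1 ≤ T ∧
        (|R| + ‖ψ‖ + 1) / ‖u‖ ≤ T :=
      ⟨max ((|R| + ‖ψ‖ + 1) / ‖u‖) (max (t + 1) (1 + |B| + |D|)),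
        le_max_of_le_right (le_max_right _ _),
        le_max_of_le_right (le_max_left _ _), le_max_left _ _⟩
    have hTpos : 0 < T :=
      lt_of_lt_of_le (by positivity : (0 : ℝ) < 1 + |B| + |D|) hT1
    have hTu : |R| + ‖ψ‖ + 1 ≤ T * ‖u‖ := by
      rw [div_le_iff₀ hnu] at hTR
      linarith
    have hwn : T * ‖u‖ - ‖ψ‖ ≤ ‖T • u + ψ‖ := by
      have h1 : T * ‖u‖ = ‖T • u‖ := by
        rw [norm_smul, Real.norm_eq_abs, abs_of_pos hTpos]
      have h2 : ‖T • u‖ = ‖(T • u + ψ) - ψ‖ := by congr 1; abel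
      have h3 : ‖(T • u + ψ) - ψ‖ ≤ ‖T • u + ψ‖ + ‖ψ‖ := norm_sub_le _ _
      linarith [h1 ▸ h2 ▸ h3]
    have hwR : |R| + 1 ≤ ‖T • u + ψ‖ := by linarith
    have hwpos : 0 < ‖T • u + ψ‖ := by
      have := abs_nonneg R
      linarith
    have hFw : M * ‖T • u + ψ‖ ^ 2 ≤ F (T • u + ψ) := by
      have hge : R ≤ ‖T • u + ψ‖ := le_trans (le_abs_self R) (by linarith)
      have h1 := hR _ hge
      have h2 : 0 < ‖T • u + ψ‖ ^ 2 := by positivity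
      calc M * ‖T • u + ψ‖ ^ 2 ≤ (F (T • u + ψ) / ‖T • u + ψ‖ ^ 2) * ‖T • u + ψ‖ ^ 2 :=
            mul_le_mul_of_nonneg_right h1 h2.le
        _ = F (T • u + ψ) := div_mul_cancel₀ _ h2.ne'
    have hhT : 0 ≤ h T := by
      have hq2 : (T * ‖u‖ - ‖ψ‖) ^ 2 ≤ ‖T • u + ψ‖ ^ 2 := by
        apply pow_le_pow_left₀ _ hwn
        have := norm_nonneg ψ
        have := abs_nonneg R
        linarith
      have h3 := mul_le_mul_of_nonneg_left hq2 hMpos.le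
      have hMu2 : M * (T * ‖u‖) ^ 2 = (α / 2 + 1) * T ^ 2 := by
        have : M * (T * ‖u‖) ^ 2 = (M * ‖u‖ ^ 2) * T ^ 2 := by ring
        rw [this, hMu]
      have hexp : M * (T * ‖u‖ - ‖ψ‖) ^ 2
          = (α / 2 + 1) * T ^ 2 - T * (2 * M * ‖u‖ * ‖ψ‖) + M * ‖ψ‖ ^ 2 := by
        calc M * (T * ‖u‖ - ‖ψ‖) ^ 2
            = M * (T * ‖u‖) ^ 2 - T * (2 * M * ‖u‖ * ‖ψ‖) + M * ‖ψ‖ ^ 2 := by ring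
          _ = (α / 2 + 1) * T ^ 2 - T * (2 * M * ‖u‖ * ‖ψ‖) + M * ‖ψ‖ ^ 2 := by
              rw [hMu2]
      have e1 : T ^ 2 - T * B + D ≤ F (T • u + ψ) - F u - ((T ^ 2 - 1) / 2 * α + T * c) := by
        rw [hB, hD]
        linarith [hFw, h3, hexp]
      have e2 : 0 ≤ T ^ 2 - T * B + D := by
        have p1 : T * B ≤ T * |B| := mul_le_mul_of_nonneg_left (le_abs_self B) hTpos.le
        have p2 : T * (1 + |B| + |D|) ≤ T * T := mul_le_mul_of_nonneg_left hT1 hTpos.le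
        have p3 : 0 ≤ (T - 1) * |D| :=
          mul_nonneg (by nlinarith [abs_nonneg B, abs_nonneg D]) (abs_nonneg D)
        nlinarith [neg_abs_le D]
      have hTval : h T = F (T • u + ψ) - F u - ((T ^ 2 - 1) / 2 * α + T * c) := by
        rw [hhdef]
      linarith [hTval ▸ (le_trans e2 e1)]
    -- minimum argument
    by_contra hcon
    rw [not_le] at hcon
    obtain ⟨s, hsmem, hsmin⟩ := (isCompact_Icc : IsCompact (Set.Icc (0 : ℝ) T)).exists_isMinOn
      (Set.nonempty_Icc.2 hTpos.le) hcont.continuousOn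
    have hts : h s ≤ h t := hsmin (Set.mem_Icc.2 ⟨ht, by linarith⟩)
    have hs0 : h s < 0 := lt_of_le_of_lt hts hcon
    have hsne0 : s ≠ 0 := by rintro rfl; linarith
    have hsneT : s ≠ T := by rintro rfl; linarith
    have hsIoo : s ∈ Set.Ioo (0 : ℝ) T :=
      ⟨(hsmem.1).lt_of_ne (Ne.symm hsne0), (hsmem.2).lt_of_ne hsneT⟩
    have hloc : IsLocalMin h s := hsmin.isLocalMin (Icc_mem_nhds hsIoo.1 hsIoo.2)
    have hder0 := hloc.hasDerivAt_eq_zero (hd s)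
    set w := s • u + ψ with hw
    have hβval : ⟪f u, w⟫ = s * α + c := by
      rw [hw, inner_add_right, real_inner_smul_right]
    have hsym : ⟪f u, w⟫ = ⟪f w, u⟫ := by linarith [hβval, hder0]
    set β := ⟪f u, w⟫ with hβ
    have hsval : h s = F w - F u - (s * β - (s ^ 2 + 1) / 2 * α) := by
      have e : (s ^ 2 - 1) / 2 * α + s * c = s * β - (s ^ 2 + 1) / 2 * α := by
        rw [hβval]; ring
      rw [hhdef]
      simp only [← hw, e]
    rw [hsval] at hs0
    rcases le_or_gt β 0 with hβle | hβpos
    · have p1 : s * β ≤ 0 := mul_nonpos_of_nonneg_of_nonpos hsIoo.1.le hβle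
      have p2 : 0 ≤ s ^ 2 * α := mul_nonneg (sq_nonneg s) hα.le
      nlinarith [hFnn w, hF4 u]
    · have h5 := hF5 u w hsym hβpos
      rw [← hβ] at h5
      have h5' : 2 * α * (F u - F w) ≤ α ^ 2 - β ^ 2 := by
        rw [le_div_iff₀ (by positivity : (0 : ℝ) < 2 * α)] at h5
        linarith
      nlinarith [h5', sq_nonneg (s * α - β), hα, hs0]
end

section
/- Let Φ : ℝ → [0,∞) be an N-function of class C¹ satisfying the Δ₂- and ∇₂-conditions globally. Let F : ℝ³ × ℝ³ → ℝ be such that F(x,·) is differentiable for a.e. x ∈ ℝ³ with f := ∂_u F a Carathéodory function (measurable in x, continuous in u), F(x,0) = 0, and |f(x,u)| ≤ c₁·Φ'(|u|) for some c₁ > 0, all u ∈ ℝ³ and a.e. x ∈ ℝ³. Let (Eₙ) be a sequence of measurable functions ℝ³ → ℝ³ with sup_n ∫_{ℝ³} Φ(|Eₙ|) dx < ∞ and Eₙ → E a.e. on ℝ³. Then lim_{n→∞} ∫_{ℝ³} (F(x,Eₙ(x)) − F(x,Eₙ(x) − E(x))) dx = ∫_{ℝ³} F(x,E(x)) dx.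 -/
open MeasureTheory Filter Topology
open scoped ENNReal

private lemma comp_aemeasurable
    {F : EuclideanSpace ℝ (Fin 3) → EuclideanSpace ℝ (Fin 3) → ℝ}
    (hFmeas : ∀ u, Measurable (fun x => F x u))
    (hFcont : ∀ᵐ x, Continuous (F x))
    {g : EuclideanSpace ℝ (Fin 3) → EuclideanSpace ℝ (Fin 3)} (hg : Measurable g) :
    AEMeasurable (fun x => F x (g x)) := by
  refine aemeasurable_of_tendsto_metrizable_ae'
    (f := fun k x => F x (SimpleFunc.approxOn g hg Set.univ 0 (Set.mem_univ 0) k x))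
    (fun k => (SimpleFunc.measurable_bind _ (fun u x => F x u) hFmeas).aemeasurable) ?_
  filter_upwards [hFcont] with x hx
  exact (hx.tendsto (g x)).comp
    (SimpleFunc.tendsto_approxOn hg (Set.mem_univ 0) (by simp))

set_option maxHeartbeats 2000000 in
theorem stmt3 (Φ : ℝ → ℝ) (hC1 : ContDiff ℝ 1 Φ)
    (hconv : ConvexOn ℝ Set.univ Φ) (heven : ∀ t, Φ (-t) = Φ t)
    (hnonneg : ∀ t, 0 ≤ Φ t) (hzero : ∀ t, Φ t = 0 ↔ t = 0)
    (hlim0 : Tendsto (fun t => Φ t / t) (nhdsWithin 0 (Set.Ioi 0)) (𝓝 0))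
    (hliminf : Tendsto (fun t => Φ t / t) atTop atTop)
    (hDelta2 : ∃ K : ℝ, 1 < K ∧ ∀ t : ℝ, Φ (2 * t) ≤ K * Φ t)
    (hNabla2 : ∃ K' : ℝ, 1 < K' ∧ ∀ t : ℝ, 2 * K' * Φ t ≤ Φ (K' * t))
    (F : EuclideanSpace ℝ (Fin 3) → EuclideanSpace ℝ (Fin 3) → ℝ)
    (f : EuclideanSpace ℝ (Fin 3) → EuclideanSpace ℝ (Fin 3) → EuclideanSpace ℝ (Fin 3))
    (hFmeas : ∀ u, Measurable (fun x => F x u))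
    (hfmeas : ∀ u, Measurable (fun x => f x u))
    (hfcont : ∀ᵐ x, Continuous (f x))
    (hgrad : ∀ᵐ x, ∀ u, HasGradientAt (F x) (f x u) u)
    (hF0 : ∀ᵐ x, F x 0 = 0)
    (c₁ : ℝ) (hc₁ : 0 < c₁)
    (hgrowth : ∀ᵐ x, ∀ u, ‖f x u‖ ≤ c₁ * deriv Φ ‖u‖)
    (Eseq : ℕ → EuclideanSpace ℝ (Fin 3) → EuclideanSpace ℝ (Fin 3))
    (Elim : EuclideanSpace ℝ (Fin 3) → EuclideanSpace ℝ (Fin 3))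
    (hEmeas : ∀ n, Measurable (Eseq n)) (hElimmeas : Measurable Elim)
    (C : ℝ≥0∞) (hC : C < ⊤)
    (hbound : ∀ n, (∫⁻ x, ENNReal.ofReal (Φ ‖Eseq n x‖)) ≤ C)
    (hae : ∀ᵐ x, Tendsto (fun n => Eseq n x) atTop (𝓝 (Elim x))) :
    Tendsto (fun n => ∫ x, (F x (Eseq n x) - F x (Eseq n x - Elim x))) atTop
      (𝓝 (∫ x, F x (Elim x))) := by
  obtain ⟨K, hK1, hK⟩ := hDelta2
  have hK0 : (0:ℝ) < K := lt_trans one_pos hK1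
  have hdiff : Differentiable ℝ Φ := hC1.differentiable one_ne_zero
  have hΦ0 : Φ 0 = 0 := (hzero 0).mpr rfl
  have hdmono : Monotone (deriv Φ) := by
    have := hconv.monotoneOn_deriv (fun x _ => hdiff x)
    rwa [monotoneOn_univ] at this
  have hd0 : deriv Φ 0 = 0 := by
    have hmin : IsLocalMin Φ 0 :=
      Filter.Eventually.of_forall fun t => by rw [hΦ0]; exact hnonneg t
    exact hmin.deriv_eq_zero
  have hdnn : ∀ s : ℝ, 0 ≤ s → 0 ≤ deriv Φ s := fun s hs => hd0 ▸ hdmono hs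
  have hΦmono : ∀ s t : ℝ, 0 ≤ s → s ≤ t → Φ s ≤ Φ t := by
    have hmono : MonotoneOn Φ (Set.Ici 0) := by
      refine monotoneOn_of_deriv_nonneg (convex_Ici 0) hC1.continuous.continuousOn
        (fun x _ => (hdiff x).differentiableWithinAt) ?_
      intro x hx
      rw [interior_Ici] at hx
      exact hdnn x (le_of_lt hx)
    intro s t hs hst
    exact hmono hs (le_trans hs hst) hst
  have hΔ : ∀ (j : ℕ) (t : ℝ), Φ (2 ^ j * t) ≤ K ^ j * Φ t := by
    intro j
    induction j with
    | zero => intro t; simp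
    | succ j ih =>
      intro t
      have he : (2:ℝ) ^ (j+1) * t = 2 * (2 ^ j * t) := by ring
      rw [he]
      calc Φ (2 * (2 ^ j * t)) ≤ K * Φ (2 ^ j * t) := hK _
        _ ≤ K * (K ^ j * Φ t) := mul_le_mul_of_nonneg_left (ih t) hK0.le
        _ = K ^ (j+1) * Φ t := by ring
  have hKey : ∀ s : ℝ, 0 ≤ s → deriv Φ s * s ≤ K * Φ s := by
    intro s hs
    rcases eq_or_lt_of_le hs with h | h
    · rw [← h, hd0, hΦ0]; simp
    · have hslope := hconv.deriv_le_slope (Set.mem_univ s) (Set.mem_univ (2*s))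
        (by linarith) (hdiff s)
      rw [slope_def_field] at hslope
      have hne : (2*s - s) = s := by ring
      rw [hne] at hslope
      have h2 : Φ (2*s) ≤ K * Φ s := hK s
      have h3 : deriv Φ s * s ≤ Φ (2*s) - Φ s := by
        have := mul_le_mul_of_nonneg_right hslope h.le
        rwa [div_mul_cancel₀ _ h.ne'] at this
      have := hnonneg s
      linarith
  have hhalf : ∀ j : ℕ, (0:ℝ) ≤ (2⁻¹:ℝ) ^ j := fun j => by positivity
  have hYoung : ∀ (j : ℕ) (s r : ℝ), 0 ≤ s → 0 ≤ r →
      deriv Φ s * r ≤ (2⁻¹:ℝ)^j * (K * Φ s) + (2⁻¹:ℝ)^j * (K^(j+1) * Φ r) := by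
    intro j s r hs hr
    have h2j : (0:ℝ) < 2 ^ j := by positivity
    have hinv : (2⁻¹:ℝ)^j = ((2:ℝ)^j)⁻¹ := by rw [inv_pow]
    have hterm1 : 0 ≤ (2⁻¹:ℝ)^j * (K * Φ s) :=
      mul_nonneg (hhalf j) (mul_nonneg hK0.le (hnonneg s))
    have hterm2 : 0 ≤ (2⁻¹:ℝ)^j * (K^(j+1) * Φ r) :=
      mul_nonneg (hhalf j) (mul_nonneg (pow_nonneg hK0.le _) (hnonneg r))
    rcases le_or_gt (2 ^ j * r) s with h | h
    · have hr' : r ≤ (2⁻¹:ℝ)^j * s := by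
        rw [hinv]
        rw [inv_mul_eq_div, le_div_iff₀ h2j]
        linarith [h]
      have h1 : deriv Φ s * r ≤ deriv Φ s * ((2⁻¹:ℝ)^j * s) :=
        mul_le_mul_of_nonneg_left hr' (hdnn s hs)
      have h2 : deriv Φ s * ((2⁻¹:ℝ)^j * s) = (2⁻¹:ℝ)^j * (deriv Φ s * s) := by ring
      have h3 : (2⁻¹:ℝ)^j * (deriv Φ s * s) ≤ (2⁻¹:ℝ)^j * (K * Φ s) :=
        mul_le_mul_of_nonneg_left (hKey s hs) (hhalf j)
      linarith
    · have hm : deriv Φ s ≤ deriv Φ (2 ^ j * r) := hdmono h.le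
      have h1 : deriv Φ s * r ≤ deriv Φ (2 ^ j * r) * r :=
        mul_le_mul_of_nonneg_right hm hr
      have h2 : deriv Φ (2 ^ j * r) * r
          = (2⁻¹:ℝ)^j * (deriv Φ (2 ^ j * r) * (2 ^ j * r)) := by
        rw [hinv]; field_simp
      have h3 : deriv Φ (2 ^ j * r) * (2 ^ j * r) ≤ K * Φ (2 ^ j * r) :=
        hKey _ (by positivity)
      have h4 : Φ (2 ^ j * r) ≤ K ^ j * Φ r := hΔ j r
      have h5 : K * Φ (2 ^ j * r) ≤ K * (K ^ j * Φ r) :=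
        mul_le_mul_of_nonneg_left h4 hK0.le
      have h6 : (2⁻¹:ℝ)^j * (deriv Φ (2 ^ j * r) * (2 ^ j * r))
          ≤ (2⁻¹:ℝ)^j * (K * (K ^ j * Φ r)) :=
        mul_le_mul_of_nonneg_left (le_trans h3 h5) (hhalf j)
      have h7 : (2⁻¹:ℝ)^j * (K * (K ^ j * Φ r)) = (2⁻¹:ℝ)^j * (K^(j+1) * Φ r) := by ring
      linarith
  have hΦadd : ∀ p q : ℝ, 0 ≤ p → 0 ≤ q → Φ (p + q) ≤ K * Φ p + K * Φ q := by
    intro p q hp hq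
    rcases le_total p q with h | h
    · have h1 : Φ (p + q) ≤ Φ (2 * q) := hΦmono _ _ (by linarith) (by linarith)
      have h2 : Φ (2 * q) ≤ K * Φ q := hK q
      have h3 : 0 ≤ K * Φ p := mul_nonneg hK0.le (hnonneg p)
      linarith
    · have h1 : Φ (p + q) ≤ Φ (2 * p) := hΦmono _ _ (by linarith) (by linarith)
      have h2 : Φ (2 * p) ≤ K * Φ p := hK p
      have h3 : 0 ≤ K * Φ q := mul_nonneg hK0.le (hnonneg q)
      linarith
  -- continuity of F x
  have hFcont : ∀ᵐ x, Continuous (F x) := by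
    filter_upwards [hgrad] with x hx
    exact continuous_iff_continuousAt.mpr fun u => (hx u).differentiableAt.continuousAt
  -- mean value estimate
  have hMVT : ∀ᵐ x, ∀ u v : EuclideanSpace ℝ (Fin 3),
      |F x u - F x v| ≤ c₁ * deriv Φ (‖u‖ + ‖v‖) * ‖u - v‖ := by
    filter_upwards [hgrad, hgrowth] with x hx hgr
    intro u v
    have hseg : segment ℝ v u ⊆ Metric.closedBall 0 (‖u‖ + ‖v‖) := by
      apply (convex_closedBall (0 : EuclideanSpace ℝ (Fin 3)) _).segment_subset
      · rw [Metric.mem_closedBall, dist_zero_right]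
        linarith [norm_nonneg u]
      · rw [Metric.mem_closedBall, dist_zero_right]
        linarith [norm_nonneg v]
    have hmvt := Convex.norm_image_sub_le_of_norm_hasFDerivWithin_le
      (f := F x) (f' := fun p => InnerProductSpace.toDual ℝ _ (f x p))
      (s := segment ℝ v u) (C := c₁ * deriv Φ (‖u‖ + ‖v‖))
      (fun p _ => (hasGradientAt_iff_hasFDerivAt.mp (hx p)).hasFDerivWithinAt)
      (fun p hp => by
        rw [LinearIsometryEquiv.norm_map]
        refine le_trans (hgr p) (mul_le_mul_of_nonneg_left (hdmono ?_) hc₁.le)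
        have hmem := hseg hp
        rwa [Metric.mem_closedBall, dist_zero_right] at hmem)
      (convex_segment v u) (left_mem_segment ℝ v u) (right_mem_segment ℝ v u)
    simpa [Real.norm_eq_abs] using hmvt
  have hFb : ∀ᵐ x, ∀ u, |F x u| ≤ c₁ * K * Φ ‖u‖ := by
    filter_upwards [hMVT, hF0] with x hx h0
    intro u
    have h1 : |F x u| ≤ c₁ * deriv Φ ‖u‖ * ‖u‖ := by
      have := hx u 0
      simpa [h0] using this
    have h2 : c₁ * (deriv Φ ‖u‖ * ‖u‖) ≤ c₁ * (K * Φ ‖u‖) :=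
      mul_le_mul_of_nonneg_left (hKey _ (norm_nonneg u)) hc₁.le
    calc |F x u| ≤ c₁ * deriv Φ ‖u‖ * ‖u‖ := h1
      _ = c₁ * (deriv Φ ‖u‖ * ‖u‖) := by ring
      _ ≤ c₁ * (K * Φ ‖u‖) := h2
      _ = c₁ * K * Φ ‖u‖ := by ring
  -- integrability of Φ compositions
  have hmeasΦn : ∀ n, Measurable fun x => Φ ‖Eseq n x‖ :=
    fun n => hC1.continuous.measurable.comp (hEmeas n).norm
  have hmeasΦE : Measurable fun x => Φ ‖Elim x‖ :=
    hC1.continuous.measurable.comp hElimmeas.norm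
  have hΦEn : ∀ n, Integrable (fun x => Φ ‖Eseq n x‖) := by
    intro n
    refine ⟨(hmeasΦn n).aestronglyMeasurable, ?_⟩
    rw [hasFiniteIntegral_iff_ofReal (Filter.Eventually.of_forall fun x => hnonneg _)]
    exact lt_of_le_of_lt (hbound n) hC
  have hΦE : Integrable (fun x => Φ ‖Elim x‖) := by
    refine ⟨hmeasΦE.aestronglyMeasurable, ?_⟩
    rw [hasFiniteIntegral_iff_ofReal (Filter.Eventually.of_forall fun x => hnonneg _)]
    have hle : (∫⁻ x, ENNReal.ofReal (Φ ‖Elim x‖)) ≤ C := by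
      have heq : ∀ᵐ x, ENNReal.ofReal (Φ ‖Elim x‖)
          = Filter.liminf (fun n => ENNReal.ofReal (Φ ‖Eseq n x‖)) atTop := by
        filter_upwards [hae] with x hx
        have hT : Tendsto (fun n => ENNReal.ofReal (Φ ‖Eseq n x‖)) atTop
            (𝓝 (ENNReal.ofReal (Φ ‖Elim x‖))) :=
          (ENNReal.continuous_ofReal.tendsto _).comp
            ((hC1.continuous.tendsto _).comp hx.norm)
        exact hT.liminf_eq.symm
      calc (∫⁻ x, ENNReal.ofReal (Φ ‖Elim x‖))
          = ∫⁻ x, Filter.liminf (fun n => ENNReal.ofReal (Φ ‖Eseq n x‖)) atTop :=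
            lintegral_congr_ae heq
        _ ≤ Filter.liminf (fun n => ∫⁻ x, ENNReal.ofReal (Φ ‖Eseq n x‖)) atTop :=
            lintegral_liminf_le fun n => ENNReal.measurable_ofReal.comp (hmeasΦn n)
        _ ≤ Filter.liminf (fun _ : ℕ => C) atTop :=
            Filter.liminf_le_liminf (Filter.Eventually.of_forall hbound)
        _ = C := Filter.liminf_const C
    exact lt_of_le_of_lt hle hC
  have hIntBound : ∀ n, (∫ x, Φ ‖Eseq n x‖) ≤ C.toReal := by
    intro n
    rw [integral_eq_lintegral_of_nonneg_ae (Filter.Eventually.of_forall fun x => hnonneg _)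
      (hmeasΦn n).aestronglyMeasurable]
    exact ENNReal.toReal_mono hC.ne (hbound n)
  -- measurability of compositions
  have hm1 : ∀ n, AEMeasurable (fun x => F x (Eseq n x)) :=
    fun n => comp_aemeasurable hFmeas hFcont (hEmeas n)
  have hm2 : ∀ n, AEMeasurable (fun x => F x (Eseq n x - Elim x)) :=
    fun n => comp_aemeasurable hFmeas hFcont ((hEmeas n).sub hElimmeas)
  have hm3 : AEMeasurable (fun x => F x (Elim x)) :=
    comp_aemeasurable hFmeas hFcont hElimmeas
  have hInt1 : ∀ n, Integrable fun x => F x (Eseq n x) := by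
    intro n
    refine Integrable.mono' ((hΦEn n).const_mul (c₁ * K)) (hm1 n).aestronglyMeasurable ?_
    filter_upwards [hFb] with x hx
    simpa [Real.norm_eq_abs] using hx (Eseq n x)
  have hInt3 : Integrable fun x => F x (Elim x) := by
    refine Integrable.mono' (hΦE.const_mul (c₁ * K)) hm3.aestronglyMeasurable ?_
    filter_upwards [hFb] with x hx
    simpa [Real.norm_eq_abs] using hx (Elim x)
  have hInt2 : ∀ n, Integrable fun x => F x (Eseq n x - Elim x) := by
    intro n
    refine Integrable.mono'
      (((hΦEn n).const_mul (c₁ * K * K)).add (hΦE.const_mul (c₁ * K * K)))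
      (hm2 n).aestronglyMeasurable ?_
    filter_upwards [hFb] with x hx
    have h1 := hx (Eseq n x - Elim x)
    have h2 : Φ ‖Eseq n x - Elim x‖ ≤ K * Φ ‖Eseq n x‖ + K * Φ ‖Elim x‖ :=
      le_trans (hΦmono _ _ (norm_nonneg _) (norm_sub_le _ _))
        (hΦadd _ _ (norm_nonneg _) (norm_nonneg _))
    have h3 : c₁ * K * Φ ‖Eseq n x - Elim x‖
        ≤ c₁ * K * (K * Φ ‖Eseq n x‖ + K * Φ ‖Elim x‖) :=
      mul_le_mul_of_nonneg_left h2 (mul_nonneg hc₁.le hK0.le)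
    have h4 : c₁ * K * (K * Φ ‖Eseq n x‖ + K * Φ ‖Elim x‖)
        = c₁ * K * K * Φ ‖Eseq n x‖ + c₁ * K * K * Φ ‖Elim x‖ := by ring
    rw [Real.norm_eq_abs]
    simp only [Pi.add_apply]
    linarith only [h1, h3, h4]
  -- the key pointwise estimate
  have key : ∀ j : ℕ, ∀ᵐ x, ∀ n,
      |F x (Eseq n x) - F x (Eseq n x - Elim x) - F x (Elim x)| ≤
        (2⁻¹:ℝ)^j * (c₁ * K^3) * Φ ‖Eseq n x‖ +
        (c₁ * ((2⁻¹:ℝ)^j * K^2 + (2⁻¹:ℝ)^j * K^(j+1) + K)) * Φ ‖Elim x‖ := by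
    intro j
    filter_upwards [hMVT, hFb] with x hx hb
    intro n
    set a := Eseq n x with ha
    set e := Elim x with he'
    have h1 : |F x a - F x (a - e)| ≤ c₁ * deriv Φ (‖a‖ + ‖a - e‖) * ‖e‖ := by
      have := hx a (a - e)
      simpa using this
    set s := ‖a‖ + ‖a - e‖ with hs'
    have hs : (0:ℝ) ≤ s := by positivity
    have hY := hYoung j s ‖e‖ hs (norm_nonneg e)
    have hsle : s ≤ 2 * ‖a‖ + ‖e‖ := by
      have := norm_sub_le a e
      rw [hs']
      linarith
    have hΦs : Φ s ≤ K^2 * Φ ‖a‖ + K * Φ ‖e‖ := by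
      have h2 : Φ s ≤ Φ (2 * ‖a‖ + ‖e‖) := hΦmono _ _ hs hsle
      have h3 : Φ (2 * ‖a‖ + ‖e‖) ≤ K * Φ (2 * ‖a‖) + K * Φ ‖e‖ :=
        hΦadd _ _ (by positivity) (norm_nonneg e)
      have h4 : Φ (2 * ‖a‖) ≤ K * Φ ‖a‖ := hK _
      nlinarith [hK0.le]
    have h5 : |F x e| ≤ c₁ * K * Φ ‖e‖ := hb e
    have h6 : |F x a - F x (a - e) - F x e| ≤ |F x a - F x (a - e)| + |F x e| := by
      rw [sub_eq_add_neg]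
      exact le_trans (abs_add_le _ _) (by rw [abs_neg])
    calc |F x a - F x (a - e) - F x e|
        ≤ |F x a - F x (a - e)| + |F x e| := h6
      _ ≤ c₁ * deriv Φ s * ‖e‖ + c₁ * K * Φ ‖e‖ := add_le_add h1 h5
      _ = c₁ * (deriv Φ s * ‖e‖) + c₁ * K * Φ ‖e‖ := by ring
      _ ≤ c₁ * ((2⁻¹:ℝ)^j * (K * Φ s) + (2⁻¹:ℝ)^j * (K^(j+1) * Φ ‖e‖)) + c₁ * K * Φ ‖e‖ :=
          add_le_add_left (mul_le_mul_of_nonneg_left hY hc₁.le) _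
      _ ≤ c₁ * ((2⁻¹:ℝ)^j * (K * (K^2 * Φ ‖a‖ + K * Φ ‖e‖))
            + (2⁻¹:ℝ)^j * (K^(j+1) * Φ ‖e‖)) + c₁ * K * Φ ‖e‖ := by
          have h7 : K * Φ s ≤ K * (K^2 * Φ ‖a‖ + K * Φ ‖e‖) :=
            mul_le_mul_of_nonneg_left hΦs hK0.le
          have h8 : (2⁻¹:ℝ)^j * (K * Φ s)
              ≤ (2⁻¹:ℝ)^j * (K * (K^2 * Φ ‖a‖ + K * Φ ‖e‖)) :=
            mul_le_mul_of_nonneg_left h7 (hhalf j)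
          have h9 := add_le_add_left h8 ((2⁻¹:ℝ)^j * (K^(j+1) * Φ ‖e‖))
          exact add_le_add_left (mul_le_mul_of_nonneg_left h9 hc₁.le) _
      _ = (2⁻¹:ℝ)^j * (c₁ * K^3) * Φ ‖a‖ +
          (c₁ * ((2⁻¹:ℝ)^j * K^2 + (2⁻¹:ℝ)^j * K^(j+1) + K)) * Φ ‖e‖ := by ring
  -- a.e. limits
  have hnlim : ∀ᵐ x, Tendsto
      (fun n => F x (Eseq n x) - F x (Eseq n x - Elim x) - F x (Elim x)) atTop (𝓝 0) := by
    filter_upwards [hFcont, hF0, hae] with x hc h0 hx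
    have t1 : Tendsto (fun n => F x (Eseq n x)) atTop (𝓝 (F x (Elim x))) :=
      (hc.tendsto _).comp hx
    have t2 : Tendsto (fun n => F x (Eseq n x - Elim x)) atTop (𝓝 (F x 0)) := by
      refine (hc.tendsto 0).comp ?_
      have := hx.sub_const (Elim x)
      simpa using this
    have t3 := (t1.sub t2).sub (tendsto_const_nhds (x := F x (Elim x)))
    simpa [h0] using t3
  have hΦlim : ∀ᵐ x, Tendsto (fun n => Φ ‖Eseq n x‖) atTop (𝓝 (Φ ‖Elim x‖)) := by
    filter_upwards [hae] with x hx
    exact (hC1.continuous.tendsto _).comp hx.norm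
  have hA0 : (0:ℝ) ≤ c₁ * K^3 := by positivity
  -- integrability of truncated functions
  have hφint : ∀ (j n : ℕ), Integrable (fun x =>
      max (|F x (Eseq n x) - F x (Eseq n x - Elim x) - F x (Elim x)|
        - (2⁻¹:ℝ)^j * (c₁ * K^3) * Φ ‖Eseq n x‖) 0) := by
    intro j n
    exact ((((hInt1 n).sub (hInt2 n)).sub hInt3).abs.sub
      ((hΦEn n).const_mul ((2⁻¹:ℝ)^j * (c₁ * K^3)))).pos_part
  have hBnn : ∀ j : ℕ,
      (0:ℝ) ≤ c₁ * ((2⁻¹:ℝ)^j * K^2 + (2⁻¹:ℝ)^j * K^(j+1) + K) := by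
    intro j
    have h1 : (0:ℝ) ≤ (2⁻¹:ℝ)^j * K^2 := mul_nonneg (hhalf j) (by positivity)
    have h2 : (0:ℝ) ≤ (2⁻¹:ℝ)^j * K^(j+1) := mul_nonneg (hhalf j) (pow_nonneg hK0.le _)
    have := hK0.le
    have := hc₁.le
    nlinarith
  -- dominated convergence for the truncated part
  have hφ0 : ∀ j : ℕ, Tendsto (fun n => ∫ x,
      max (|F x (Eseq n x) - F x (Eseq n x - Elim x) - F x (Elim x)|
        - (2⁻¹:ℝ)^j * (c₁ * K^3) * Φ ‖Eseq n x‖) 0) atTop (𝓝 0) := by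
    intro j
    have hdct := tendsto_integral_of_dominated_convergence
      (F := fun n x => max (|F x (Eseq n x) - F x (Eseq n x - Elim x) - F x (Elim x)|
        - (2⁻¹:ℝ)^j * (c₁ * K^3) * Φ ‖Eseq n x‖) 0)
      (f := fun _ => (0:ℝ))
      (bound := fun x => (c₁ * ((2⁻¹:ℝ)^j * K^2 + (2⁻¹:ℝ)^j * K^(j+1) + K)) * Φ ‖Elim x‖)
      (fun n => (hφint j n).aestronglyMeasurable)
      (hΦE.const_mul _)
      (by
        intro n
        filter_upwards [key j] with x hx
        have hxn := hx n
        have hc0 : (0:ℝ) ≤ (2⁻¹:ℝ)^j * (c₁ * K^3) * Φ ‖Eseq n x‖ :=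
          mul_nonneg (mul_nonneg (hhalf j) hA0) (hnonneg _)
        have hub : |F x (Eseq n x) - F x (Eseq n x - Elim x) - F x (Elim x)|
            - (2⁻¹:ℝ)^j * (c₁ * K^3) * Φ ‖Eseq n x‖
            ≤ (c₁ * ((2⁻¹:ℝ)^j * K^2 + (2⁻¹:ℝ)^j * K^(j+1) + K)) * Φ ‖Elim x‖ := by
          linarith only [hxn]
        have hbn : (0:ℝ) ≤ (c₁ * ((2⁻¹:ℝ)^j * K^2 + (2⁻¹:ℝ)^j * K^(j+1) + K))
            * Φ ‖Elim x‖ := mul_nonneg (hBnn j) (hnonneg _)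
        rw [Real.norm_eq_abs, abs_of_nonneg (le_max_right _ _)]
        exact max_le hub hbn)
      (by
        filter_upwards [hnlim, hΦlim] with x h1 h2
        have ht : Tendsto (fun n =>
            max (|F x (Eseq n x) - F x (Eseq n x - Elim x) - F x (Elim x)|
              - (2⁻¹:ℝ)^j * (c₁ * K^3) * Φ ‖Eseq n x‖) 0) atTop
            (𝓝 (max (|(0:ℝ)| - (2⁻¹:ℝ)^j * (c₁ * K^3) * Φ ‖Elim x‖) 0)) :=
          (h1.abs.sub (h2.const_mul ((2⁻¹:ℝ)^j * (c₁ * K^3)))).max tendsto_const_nhds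
        have hval : max (|(0:ℝ)| - (2⁻¹:ℝ)^j * (c₁ * K^3) * Φ ‖Elim x‖) 0 = 0 := by
          rw [abs_zero, zero_sub]
          exact max_eq_right (neg_nonpos.mpr
            (mul_nonneg (mul_nonneg (hhalf j) hA0) (hnonneg _)))
        rwa [hval] at ht)
    simpa using hdct
  -- the inequality between integrals
  have hHle : ∀ (j n : ℕ),
      (∫ x, |F x (Eseq n x) - F x (Eseq n x - Elim x) - F x (Elim x)|)
      ≤ (∫ x, max (|F x (Eseq n x) - F x (Eseq n x - Elim x) - F x (Elim x)|
          - (2⁻¹:ℝ)^j * (c₁ * K^3) * Φ ‖Eseq n x‖) 0) + (2⁻¹:ℝ)^j * (c₁ * K^3) * C.toReal := by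
    intro j n
    have h1 : (∫ x, |F x (Eseq n x) - F x (Eseq n x - Elim x) - F x (Elim x)|)
        ≤ ∫ x, (max (|F x (Eseq n x) - F x (Eseq n x - Elim x) - F x (Elim x)|
            - (2⁻¹:ℝ)^j * (c₁ * K^3) * Φ ‖Eseq n x‖) 0 + (2⁻¹:ℝ)^j * (c₁ * K^3) * Φ ‖Eseq n x‖) := by
      refine integral_mono (((hInt1 n).sub (hInt2 n)).sub hInt3).abs
        ((hφint j n).add ((hΦEn n).const_mul _)) ?_
      intro x
      have hmax := le_max_left (|F x (Eseq n x) - F x (Eseq n x - Elim x) - F x (Elim x)|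
        - (2⁻¹:ℝ)^j * (c₁ * K^3) * Φ ‖Eseq n x‖) 0
      simp only []
      linarith
    rw [integral_add (hφint j n) ((hΦEn n).const_mul _)] at h1
    have h3 : (∫ x, (2⁻¹:ℝ)^j * (c₁ * K^3) * Φ ‖Eseq n x‖)
        = (2⁻¹:ℝ)^j * (c₁ * K^3) * ∫ x, Φ ‖Eseq n x‖ := integral_const_mul _ _
    have h4 : (2⁻¹:ℝ)^j * (c₁ * K^3) * (∫ x, Φ ‖Eseq n x‖) ≤ (2⁻¹:ℝ)^j * (c₁ * K^3) * C.toReal :=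
      mul_le_mul_of_nonneg_left (hIntBound n) (mul_nonneg (hhalf j) hA0)
    rw [h3] at h1
    linarith
  -- conclude tendsto of ∫ |h n| to 0
  have hT : Tendsto (fun n =>
      ∫ x, |F x (Eseq n x) - F x (Eseq n x - Elim x) - F x (Elim x)|) atTop (𝓝 0) := by
    rw [Metric.tendsto_atTop]
    intro ε hε
    have hACR : (0:ℝ) ≤ (c₁ * K^3) * C.toReal := mul_nonneg hA0 ENNReal.toReal_nonneg
    have hpos : (0:ℝ) < (c₁ * K^3) * C.toReal + 1 := by linarith
    obtain ⟨j, hj⟩ : ∃ j : ℕ, (2⁻¹:ℝ)^j < (ε/2)/((c₁ * K^3) * C.toReal + 1) :=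
      exists_pow_lt_of_lt_one (by positivity) (by norm_num)
    have hj2 : (2⁻¹:ℝ)^j * (c₁ * K^3) * C.toReal < ε/2 := by
      have h1 : (2⁻¹:ℝ)^j * (c₁ * K^3) * C.toReal = (2⁻¹:ℝ)^j * ((c₁ * K^3) * C.toReal) := by ring
      have h2 : (2⁻¹:ℝ)^j * ((c₁ * K^3) * C.toReal) ≤ (2⁻¹:ℝ)^j * ((c₁ * K^3) * C.toReal + 1) :=
        mul_le_mul_of_nonneg_left (by linarith) (hhalf j)
      have h3 : (2⁻¹:ℝ)^j * ((c₁ * K^3) * C.toReal + 1)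
          < (ε/2)/((c₁ * K^3) * C.toReal + 1) * ((c₁ * K^3) * C.toReal + 1) :=
        mul_lt_mul_of_pos_right hj hpos
      have h4 : (ε/2)/((c₁ * K^3) * C.toReal + 1) * ((c₁ * K^3) * C.toReal + 1) = ε/2 :=
        div_mul_cancel₀ _ hpos.ne'
      linarith
    have hev : ∀ᶠ n in atTop, (∫ x,
        max (|F x (Eseq n x) - F x (Eseq n x - Elim x) - F x (Elim x)|
          - (2⁻¹:ℝ)^j * (c₁ * K^3) * Φ ‖Eseq n x‖) 0) < ε/2 := by
      have := hφ0 j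
      exact this.eventually_lt_const (by linarith)
    obtain ⟨N, hN⟩ := eventually_atTop.mp hev
    refine ⟨N, fun n hn => ?_⟩
    have h5 := hHle j n
    have hnn : (0:ℝ) ≤ ∫ x, |F x (Eseq n x) - F x (Eseq n x - Elim x) - F x (Elim x)| :=
      integral_nonneg fun x => abs_nonneg _
    rw [Real.dist_eq, sub_zero, abs_of_nonneg hnn]
    have h6 := hN n hn
    linarith only [h5, hj2, h6]
  -- assemble
  have heq : ∀ n, (∫ x, (F x (Eseq n x) - F x (Eseq n x - Elim x)))
      = (∫ x, (F x (Eseq n x) - F x (Eseq n x - Elim x) - F x (Elim x)))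
        + ∫ x, F x (Elim x) := by
    intro n
    have hfg : Integrable (fun x => F x (Eseq n x) - F x (Eseq n x - Elim x)) :=
      (hInt1 n).sub (hInt2 n)
    rw [integral_sub hfg hInt3]
    ring
  have hT2 : Tendsto (fun n =>
      ∫ x, (F x (Eseq n x) - F x (Eseq n x - Elim x) - F x (Elim x))) atTop (𝓝 0) := by
    have hub : ∀ n, |∫ x, (F x (Eseq n x) - F x (Eseq n x - Elim x) - F x (Elim x))|
        ≤ ∫ x, |F x (Eseq n x) - F x (Eseq n x - Elim x) - F x (Elim x)| := by
      intro n
      rw [← Real.norm_eq_abs]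
      refine le_trans (norm_integral_le_integral_norm _) ?_
      simp [Real.norm_eq_abs]
    have hTneg := hT.neg
    rw [neg_zero] at hTneg
    exact tendsto_of_tendsto_of_tendsto_of_le_of_le hTneg hT
      (fun n => (abs_le.mp (hub n)).1) (fun n => (abs_le.mp (hub n)).2)
  have hfin : Tendsto (fun n =>
      (∫ x, (F x (Eseq n x) - F x (Eseq n x - Elim x) - F x (Elim x)))
        + ∫ x, F x (Elim x)) atTop (𝓝 (∫ x, F x (Elim x))) := by
    have := hT2.add (tendsto_const_nhds (x := ∫ x, F x (Elim x)))
    rwa [zero_add] at this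
  exact hfin.congr fun n => (heq n).symm
end

section
/- Let Ω ⊂ ℝ³ be a measurable set of finite Lebesgue measure, and let Φ : ℝ → [0,∞) be continuous with Φ(0) = 0 and lim_{t→∞} Φ(t)/t⁶ = 0. Let (uₙ) be a sequence of measurable functions Ω → ℝ with sup_n ∫_Ω |uₙ|⁶ dx < ∞ and uₙ → 0 a.e. in Ω. Then ∫_Ω Φ(|uₙ|) dx → 0 as n → ∞. -/
open MeasureTheory Filter Topology
open scoped ENNReal

theorem stmt7 (Ω : Set (EuclideanSpace ℝ (Fin 3))) (hΩ : MeasurableSet Ω)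
    (hΩfin : volume Ω < ⊤)
    (Φ : ℝ → ℝ) (hcont : Continuous Φ) (hΦ0 : Φ 0 = 0) (hnonneg : ∀ t, 0 ≤ Φ t)
    (hlim : Tendsto (fun t => Φ t / t ^ 6) atTop (𝓝 0))
    (u : ℕ → EuclideanSpace ℝ (Fin 3) → ℝ) (hu : ∀ n, Measurable (u n))
    (C : ℝ≥0∞) (hC : C < ⊤)
    (hbound : ∀ n, (∫⁻ x in Ω, ENNReal.ofReal (|u n x| ^ 6)) ≤ C)
    (hae : ∀ᵐ x ∂(volume.restrict Ω), Tendsto (fun n => u n x) atTop (𝓝 0)) :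
    Tendsto (fun n => ∫⁻ x in Ω, ENNReal.ofReal (Φ |u n x|)) atTop (𝓝 0) := by
  rw [ENNReal.tendsto_nhds_zero]
  intro ε hε
  set ε' : ℝ≥0∞ := min ε 1 with hε'def
  have hε'0 : ε' ≠ 0 := (lt_min hε (by norm_num)).ne'
  have hε'top : ε' ≠ ⊤ := (lt_of_le_of_lt (min_le_right _ _) (by norm_num)).ne
  have hhalf : (0 : ℝ≥0∞) < ε' / 2 := ENNReal.half_pos hε'0
  -- choose δ > 0 with ofReal δ * C ≤ ε'/2
  obtain ⟨δ, hδpos, hδC⟩ : ∃ δ : ℝ, 0 < δ ∧ ENNReal.ofReal δ * C ≤ ε' / 2 := by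
    rcases eq_or_ne C 0 with hC0 | hC0
    · exact ⟨1, one_pos, by simp [hC0]⟩
    · refine ⟨((ε' / 2) / C).toReal, ?_, ?_⟩
      · apply ENNReal.toReal_pos
        · exact (ENNReal.div_ne_zero.mpr ⟨hhalf.ne', hC.ne⟩)
        · exact (ENNReal.div_lt_top (by exact (ENNReal.div_lt_top hε'top (by norm_num)).ne) hC0).ne
      · rw [ENNReal.ofReal_toReal
          ((ENNReal.div_lt_top (by exact (ENNReal.div_lt_top hε'top (by norm_num)).ne) hC0).ne),
          ENNReal.div_mul_cancel hC0 hC.ne]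
  -- choose M ≥ 1 with Φ t ≤ δ t^6 for t ≥ M
  obtain ⟨M₀, hM₀⟩ := eventually_atTop.mp (hlim.eventually_lt_const hδpos)
  set M : ℝ := max M₀ 1 with hMdef
  have hM1 : (1 : ℝ) ≤ M := le_max_right _ _
  have hMbig : ∀ t : ℝ, M ≤ t → Φ t ≤ δ * t ^ 6 := by
    intro t ht
    have ht1 : (1 : ℝ) ≤ t := le_trans hM1 ht
    have ht6 : (0 : ℝ) < t ^ 6 := by positivity
    have := hM₀ t (le_trans (le_max_left _ _) ht)
    rw [div_lt_iff₀ ht6] at this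
    linarith
  -- bound on [0, M]
  obtain ⟨t₀, _, hKmax'⟩ := (isCompact_Icc (a := (0:ℝ)) (b := M)).exists_isMaxOn
    (Set.nonempty_Icc.mpr (by linarith)) hcont.continuousOn
  have hKmax : ∀ t ∈ Set.Icc (0:ℝ) M, Φ t ≤ Φ t₀ := fun t ht => hKmax' ht
  set K : ℝ := Φ t₀ with hKdef
  -- the remainder functions
  set g : ℕ → EuclideanSpace ℝ (Fin 3) → ℝ≥0∞ :=
    fun n x => if |u n x| ≤ M then ENNReal.ofReal (Φ |u n x|) else 0 with hgdef
  have hgmeas : ∀ n, Measurable (g n) := by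
    intro n
    apply Measurable.ite
    · exact measurableSet_le (hu n).abs measurable_const
    · exact (ENNReal.measurable_ofReal.comp (hcont.measurable.comp (hu n).abs))
    · exact measurable_const
  have hgbd : ∀ n x, g n x ≤ ENNReal.ofReal K := by
    intro n x
    rw [hgdef]
    dsimp only
    split_ifs with h
    · exact ENNReal.ofReal_le_ofReal (hKmax _ ⟨abs_nonneg _, h⟩)
    · exact zero_le
  have hgle : ∀ n x, g n x ≤ ENNReal.ofReal (Φ |u n x|) := by
    intro n x
    rw [hgdef]; dsimp only; split_ifs
    · exact le_rfl
    · exact zero_le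
  -- dominated convergence for g
  have hgtend : Tendsto (fun n => ∫⁻ x in Ω, g n x) atTop (𝓝 0) := by
    have h0 : (0 : ℝ≥0∞) = ∫⁻ _ in Ω, 0 := by simp
    rw [h0]
    apply tendsto_lintegral_of_dominated_convergence (fun _ => ENNReal.ofReal K)
      (fun n => (hgmeas n))
      (fun n => Filter.Eventually.of_forall (fun x => hgbd n x))
    · rw [lintegral_const]
      exact ENNReal.mul_lt_top ENNReal.ofReal_lt_top
        (by rwa [Measure.restrict_apply_univ]) |>.ne
    · filter_upwards [hae] with x hx
      have h1 : Tendsto (fun n => ENNReal.ofReal (Φ |u n x|)) atTop (𝓝 0) := by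
        have : Tendsto (fun n => Φ |u n x|) atTop (𝓝 0) := by
          have := (hcont.tendsto 0).comp (by simpa using hx.abs)
          simpa [hΦ0, Function.comp_def] using this
        have := (ENNReal.continuous_ofReal.tendsto 0).comp this
        simpa [Function.comp_def] using this
      exact tendsto_of_tendsto_of_tendsto_of_le_of_le tendsto_const_nhds h1
        (fun n => zero_le) (fun n => hgle n x)
  have hgev := (ENNReal.tendsto_nhds_zero.mp hgtend) (ε' / 2) hhalf
  filter_upwards [hgev] with n hgn
  -- pointwise splitting
  have hsplit : ∀ x, ENNReal.ofReal (Φ |u n x|) ≤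
      ENNReal.ofReal δ * ENNReal.ofReal (|u n x| ^ 6) + g n x := by
    intro x
    by_cases h : |u n x| ≤ M
    · have : g n x = ENNReal.ofReal (Φ |u n x|) := by rw [hgdef]; simp [h]
      rw [this]; exact le_add_self
    · push_neg at h
      have h1 : Φ |u n x| ≤ δ * |u n x| ^ 6 := hMbig _ h.le
      calc ENNReal.ofReal (Φ |u n x|) ≤ ENNReal.ofReal (δ * |u n x| ^ 6) :=
            ENNReal.ofReal_le_ofReal h1
        _ = ENNReal.ofReal δ * ENNReal.ofReal (|u n x| ^ 6) :=
            ENNReal.ofReal_mul hδpos.le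
        _ ≤ _ := le_self_add
  calc (∫⁻ x in Ω, ENNReal.ofReal (Φ |u n x|))
      ≤ ∫⁻ x in Ω, (ENNReal.ofReal δ * ENNReal.ofReal (|u n x| ^ 6) + g n x) :=
        lintegral_mono (fun x => hsplit x)
    _ = ENNReal.ofReal δ * (∫⁻ x in Ω, ENNReal.ofReal (|u n x| ^ 6))
          + ∫⁻ x in Ω, g n x := by
        rw [lintegral_add_right _ (hgmeas n), lintegral_const_mul]
        exact (ENNReal.measurable_ofReal.comp
          (((hu n).abs.pow_const 6).comp measurable_id))
    _ ≤ ε' / 2 + ε' / 2 := by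
        gcongr
        exact le_trans (mul_le_mul_right (hbound n) _) hδC
    _ = ε' := ENNReal.add_halves _
    _ ≤ ε := min_le_left _ _
end

section
/- Assume (I8). If u ∈ 𝒩, then u maximizes 𝒥 on the half-space ℝ⁺·u + ({0} × W): for every t ≥ 0 and every w ∈ W one has 𝒥(t·u + (0,w)) ≤ 𝒥(u). -/
open Filter Topology

theorem stmt8
    {H W : Type*} [NormedAddCommGroup H] [InnerProductSpace ℝ H] [CompleteSpace H]
    [NormedAddCommGroup W] [NormedSpace ℝ W]
    (I : H × W → ℝ) (hIC1 : ContDiff ℝ 1 I)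
    (J : H × W → ℝ) (hJ : ∀ u, J u = 1 / 2 * ‖u.1‖ ^ 2 - I u)
    (N : Set (H × W))
    (hN : N = {u : H × W | u.1 ≠ 0 ∧ fderiv ℝ J u u = 0 ∧
      ∀ w : W, fderiv ℝ J u (0, w) = 0})
    (hI8 : ∀ u ∈ N, ∀ t : ℝ, 0 ≤ t → ∀ w : W,
      (t ^ 2 - 1) / 2 * fderiv ℝ I u u + t * fderiv ℝ I u (0, w) + I u -
          I (t • u + (0, w)) ≤ 0) :
    ∀ u ∈ N, ∀ t : ℝ, 0 ≤ t → ∀ w : W, J (t • u + (0, w)) ≤ J u := by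
  intro u hu t ht w
  have hIdiff : DifferentiableAt ℝ I u := (hIC1.differentiable one_ne_zero) u
  have hD : HasFDerivAt J
      (((1:ℝ)/2) • (2 • (innerSL ℝ u.1).comp (ContinuousLinearMap.fst ℝ H W))
        - fderiv ℝ I u) u := by
    have h1 : HasFDerivAt (fun v : H × W => ‖v.1‖ ^ 2)
        (2 • (innerSL ℝ u.1).comp (ContinuousLinearMap.fst ℝ H W)) u :=
      (hasFDerivAt_fst (p := u)).norm_sq
    have h2 := (h1.const_smul ((1:ℝ)/2)).sub hIdiff.hasFDerivAt
    have hJeq : J = fun x : H × W => ((1:ℝ)/2) • ‖x.1‖ ^ 2 - I x := by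
      funext v; rw [hJ]; norm_num
    rw [hJeq]; exact h2
  have hfd : fderiv ℝ J u
      = ((1:ℝ)/2) • (2 • (innerSL ℝ u.1).comp (ContinuousLinearMap.fst ℝ H W))
        - fderiv ℝ I u := hD.fderiv
  rw [hN] at hu
  obtain ⟨hu0, huu, huw⟩ := hu
  rw [hfd] at huu huw
  simp only [ContinuousLinearMap.sub_apply, ContinuousLinearMap.smul_apply,
    ContinuousLinearMap.coe_smul', Pi.smul_apply, ContinuousLinearMap.comp_apply,
    ContinuousLinearMap.coe_fst', innerSL_apply_apply, smul_eq_mul, nsmul_eq_mul,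
    Nat.cast_ofNat] at huu huw
  have hIu : fderiv ℝ I u u = ‖u.1‖ ^ 2 := by
    have := real_inner_self_eq_norm_sq u.1
    nlinarith [huu]
  have hIw : fderiv ℝ I u (0, w) = 0 := by
    have := huw w
    simp [inner_zero_right] at this
    linarith
  have key := hI8 u (by rw [hN]; exact ⟨hu0, by rw [hfd] at *; simpa using huu,
    by intro w'; rw [hfd]; simpa using huw w'⟩) t ht w
  rw [hIu, hIw] at key
  have hfst : (t • u + ((0 : H), w)).1 = t • u.1 := by simp
  rw [hJ, hJ u, hfst, norm_smul]
  simp only [Real.norm_eq_abs, mul_pow, sq_abs]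
  nlinarith [key]
end

section
/- Assume (I1)–(I5) and (I7), together with the stated properties of the map m and of 𝒥̃ := 𝒥 ∘ m. Let H_k be a finite-dimensional subspace of H. Then 𝒥̃(v) → −∞ whenever ‖v‖ → ∞ with v ∈ H_k. -/
open Filter Topology

theorem stmt9
    {H W : Type*} [NormedAddCommGroup H] [InnerProductSpace ℝ H] [CompleteSpace H]
    [NormedAddCommGroup W] [NormedSpace ℝ W]
    (hWweak : ∀ w : ℕ → W, (∃ C : ℝ, ∀ n, ‖w n‖ ≤ C) →
      ∃ (w₀ : W) (φ : ℕ → ℕ), StrictMono φ ∧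
        ∀ ℓ : W →L[ℝ] ℝ, Tendsto (fun n => ℓ (w (φ n))) atTop (𝓝 (ℓ w₀)))
    (I : H × W → ℝ) (hIC1 : ContDiff ℝ 1 I)
    (J : H × W → ℝ) (hJ : ∀ u, J u = 1 / 2 * ‖u.1‖ ^ 2 - I u)
    (hI1 : I 0 = 0 ∧ ∀ u, 0 ≤ I u)
    (hI2 : ∀ (v : ℕ → H) (w : ℕ → W) (v₀ : H) (w₀ : W),
      Tendsto v atTop (𝓝 v₀) →
      (∀ ℓ : W →L[ℝ] ℝ, Tendsto (fun n => ℓ (w n)) atTop (𝓝 (ℓ w₀))) →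
      I (v₀, w₀) ≤ liminf (fun n => I (v n, w n)) atTop)
    (hI3 : ∀ (v : ℕ → H) (w : ℕ → W) (v₀ : H) (w₀ : W),
      Tendsto v atTop (𝓝 v₀) →
      (∀ ℓ : W →L[ℝ] ℝ, Tendsto (fun n => ℓ (w n)) atTop (𝓝 (ℓ w₀))) →
      Tendsto (fun n => I (v n, w n)) atTop (𝓝 (I (v₀, w₀))) →
      Tendsto w atTop (𝓝 w₀))
    (hI4 : ∀ M : ℝ, ∃ R : ℝ, ∀ (v : H) (w : W),
      R ≤ Real.sqrt (‖v‖ ^ 2 + ‖w‖ ^ 2) → M ≤ ‖v‖ + I (v, w))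
    (hI5 : ∀ u : H × W, (∀ w' : W, fderiv ℝ I u (0, w') = 0) →
      ∀ w : W, w ≠ 0 → I u < I (u + (0, w)))
    (hI7 : ∀ (t : ℕ → ℝ) (v : ℕ → H) (w : ℕ → W) (v₀ : H),
      Tendsto t atTop atTop → Tendsto v atTop (𝓝 v₀) → v₀ ≠ 0 →
      Tendsto (fun n => I (t n • ((v n, w n) : H × W)) / t n ^ 2) atTop atTop)
    (m : H → H × W)
    (hm1 : ∀ v, (m v).1 = v)
    (hmM : ∀ v, ∀ w' : W, fderiv ℝ I (m v) (0, w') = 0)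
    (hmmin : ∀ v w, I (m v) ≤ I (v, w))
    (hmuniq : ∀ (v : H) (w : W), (∀ w' : W, fderiv ℝ I (v, w) (0, w') = 0) → (v, w) = m v)
    (hmcont : Continuous m)
    (Jt : H → ℝ) (hJtdef : ∀ v, Jt v = J (m v))
    (hJt' : ∀ v : H, HasFDerivAt Jt
      ((fderiv ℝ J (m v)).comp (ContinuousLinearMap.inl ℝ H W)) v) :
    ∀ Hk : Submodule ℝ H, FiniteDimensional ℝ Hk →
      ∀ M : ℝ, ∃ R : ℝ, ∀ v : H, v ∈ Hk → R ≤ ‖v‖ → Jt v < M := by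

  intro Hk hfin M
  by_contra hcon
  push_neg at hcon
  -- hcon : ∀ R, ∃ v, v ∈ Hk ∧ R ≤ ‖v‖ ∧ M ≤ Jt v
  have hIval : ∀ v : H, I (m v) = 1/2 * ‖v‖^2 - Jt v := by
    intro v
    have h := hJtdef v
    rw [hJ, hm1] at h
    linarith
  choose v hvmem hvnorm hvJ using fun n : ℕ => hcon (n + 1)
  set t : ℕ → ℝ := fun n => ‖v n‖ with ht
  have htge : ∀ n : ℕ, (n : ℝ) + 1 ≤ t n := hvnorm
  have htpos : ∀ n, 0 < t n := fun n =>
    lt_of_lt_of_le (by positivity) (htge n)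
  have ht1 : ∀ n, 1 ≤ t n := fun n =>
    le_trans (by have := Nat.cast_nonneg (α := ℝ) n; linarith) (htge n)
  have httop : Tendsto t atTop atTop := by
    apply tendsto_atTop_mono (fun n => ?_) (f := fun n : ℕ => (n : ℝ))
      tendsto_natCast_atTop_atTop
    linarith [htge n]
  set s : ℕ → Hk := fun n => ⟨(t n)⁻¹ • v n, Hk.smul_mem _ (hvmem n)⟩ with hs
  have hsnorm : ∀ n, ‖s n‖ = 1 := by
    intro n
    have hne := (htpos n).ne'
    show ‖((t n)⁻¹ • v n : H)‖ = 1
    simp only [hs, Submodule.norm_coe, AddSubgroupClass.coe_norm, norm_smul,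
      norm_inv, Real.norm_eq_abs, abs_of_pos (htpos n)]
    field_simp
    rfl
  have hsmem : ∀ n, s n ∈ Metric.sphere (0 : Hk) 1 := by
    intro n; rw [mem_sphere_zero_iff_norm]; exact hsnorm n
  haveI : FiniteDimensional ℝ Hk := hfin
  obtain ⟨s₀, hs₀mem, φ, hφ, hconv⟩ :=
    (isCompact_sphere (0 : Hk) 1).tendsto_subseq hsmem
  have hs₀norm : ‖s₀‖ = 1 := mem_sphere_zero_iff_norm.mp hs₀mem
  have hs₀ne : (s₀ : H) ≠ 0 := by
    intro h
    have : s₀ = 0 := Subtype.ext h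
    rw [this] at hs₀norm; simp at hs₀norm
  have hconvH : Tendsto (fun k => ((s (φ k)) : H)) atTop (𝓝 (s₀ : H)) :=
    (continuous_subtype_val.tendsto s₀).comp hconv
  have httop' : Tendsto (fun k => t (φ k)) atTop atTop :=
    httop.comp hφ.tendsto_atTop
  have htendsto := hI7 (fun k => t (φ k)) (fun k => (s (φ k) : H))
    (fun k => (t (φ k))⁻¹ • (m (v (φ k))).2) s₀ httop' hconvH hs₀ne
  have hkey : ∀ k, (t (φ k)) • ((((s (φ k)) : H),
      (t (φ k))⁻¹ • (m (v (φ k))).2) : H × W) = m (v (φ k)) := by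
    intro k
    have hne := (htpos (φ k)).ne'
    apply Prod.ext
    · simp only [Prod.smul_mk, hs, smul_inv_smul₀ hne, hm1]
    · simp only [Prod.smul_mk, smul_inv_smul₀ hne]
  have htendsto' : Tendsto (fun k => I (m (v (φ k))) / (t (φ k)) ^ 2)
      atTop atTop := by
    refine htendsto.congr (fun k => ?_)
    rw [hkey k]
  have hbound : ∀ n, I (m (v n)) / t n ^ 2 ≤ 1/2 + |M| := by
    intro n
    have h1 : I (m (v n)) ≤ 1/2 * t n ^ 2 - M := by
      rw [hIval]; have := hvJ n; simp only [ht]; linarith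
    have ht2 : 1 ≤ t n ^ 2 := by nlinarith [ht1 n]
    rw [div_le_iff₀ (by positivity)]
    nlinarith [neg_abs_le M, abs_nonneg M]
  obtain ⟨k, hk⟩ := (htendsto'.eventually_ge_atTop (1/2 + |M| + 1)).exists
  linarith [hbound (φ k)]
end

section
/- Assume (I1)–(I8). Define Γ := {γ : [0,1] → X continuous : γ(t) ∈ 𝓜 for all t, γ(0) = 0, ‖γ(1)⁺‖ > r and 𝒥(γ(1)) < 0} and c_𝓜 := inf_{γ∈Γ} sup_{t∈[0,1]} 𝒥(γ(t)). Then c_𝓜 = c_𝒩 := inf{𝒥(u) : u ∈ 𝒩}. -/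
open Filter Topology

private lemma slope_right12 {φ : ℝ → ℝ} {d : ℝ} (h : HasDerivAt φ d 1) (hd : 0 < d) :
    ∃ s : ℝ, 1 < s ∧ φ 1 < φ s := by
  have hs := hasDerivAt_iff_tendsto_slope.mp h
  have h1 : ∀ᶠ s in 𝓝[≠] (1:ℝ), 0 < slope φ 1 s := hs.eventually (eventually_gt_nhds hd)
  have h2 : ∀ᶠ s in 𝓝[>] (1:ℝ), 0 < slope φ 1 s :=
    h1.filter_mono (nhdsWithin_mono _ fun x hx => ne_of_gt hx)
  obtain ⟨s, hpos, hmem⟩ := (h2.and eventually_mem_nhdsWithin).exists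
  refine ⟨s, hmem, ?_⟩
  rw [slope_def_field] at hpos
  rcases div_pos_iff.mp hpos with ⟨h1', h2'⟩ | ⟨h1', h2'⟩
  · linarith
  · have : (1:ℝ) < s := hmem
    linarith

private lemma slope_left12 {φ : ℝ → ℝ} {d : ℝ} (h : HasDerivAt φ d 1) (hd : d < 0) :
    ∃ s : ℝ, 0 < s ∧ s < 1 ∧ φ 1 < φ s := by
  have hs := hasDerivAt_iff_tendsto_slope.mp h
  have h1 : ∀ᶠ s in 𝓝[≠] (1:ℝ), slope φ 1 s < 0 := hs.eventually (eventually_lt_nhds hd)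
  have h2 : ∀ᶠ s in 𝓝[<] (1:ℝ), slope φ 1 s < 0 :=
    h1.filter_mono (nhdsWithin_mono _ fun x hx => ne_of_lt hx)
  have h3 : ∀ᶠ s in 𝓝[<] (1:ℝ), s ∈ Set.Ioo (0:ℝ) 1 :=
    Ioo_mem_nhdsLT_of_mem ⟨zero_lt_one, le_rfl⟩
  obtain ⟨s, hneg, hmem⟩ := (h2.and h3).exists
  refine ⟨s, hmem.1, hmem.2, ?_⟩
  rw [slope_def_field] at hneg
  rcases div_neg_iff.mp hneg with ⟨h1', h2'⟩ | ⟨h1', h2'⟩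
  · linarith
  · have : s < 1 := hmem.2
    linarith
set_option maxHeartbeats 2000000 in
theorem stmt12
    {H W : Type*} [NormedAddCommGroup H] [InnerProductSpace ℝ H] [CompleteSpace H]
    [NormedAddCommGroup W] [NormedSpace ℝ W]
    (hWweak : ∀ w : ℕ → W, (∃ C : ℝ, ∀ n, ‖w n‖ ≤ C) →
      ∃ (w₀ : W) (φ : ℕ → ℕ), StrictMono φ ∧
        ∀ ℓ : W →L[ℝ] ℝ, Tendsto (fun n => ℓ (w (φ n))) atTop (𝓝 (ℓ w₀)))
    (I : H × W → ℝ) (hIC1 : ContDiff ℝ 1 I)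
    (J : H × W → ℝ) (hJ : ∀ u, J u = 1 / 2 * ‖u.1‖ ^ 2 - I u)
    (hI1 : I 0 = 0 ∧ ∀ u, 0 ≤ I u)
    (hI2 : ∀ (v : ℕ → H) (w : ℕ → W) (v₀ : H) (w₀ : W),
      Tendsto v atTop (𝓝 v₀) →
      (∀ ℓ : W →L[ℝ] ℝ, Tendsto (fun n => ℓ (w n)) atTop (𝓝 (ℓ w₀))) →
      I (v₀, w₀) ≤ liminf (fun n => I (v n, w n)) atTop)
    (hI3 : ∀ (v : ℕ → H) (w : ℕ → W) (v₀ : H) (w₀ : W),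
      Tendsto v atTop (𝓝 v₀) →
      (∀ ℓ : W →L[ℝ] ℝ, Tendsto (fun n => ℓ (w n)) atTop (𝓝 (ℓ w₀))) →
      Tendsto (fun n => I (v n, w n)) atTop (𝓝 (I (v₀, w₀))) →
      Tendsto w atTop (𝓝 w₀))
    (hI4 : ∀ M : ℝ, ∃ R : ℝ, ∀ (v : H) (w : W),
      R ≤ Real.sqrt (‖v‖ ^ 2 + ‖w‖ ^ 2) → M ≤ ‖v‖ + I (v, w))
    (hI5 : ∀ u : H × W, (∀ w' : W, fderiv ℝ I u (0, w') = 0) →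
      ∀ w : W, w ≠ 0 → I u < I (u + (0, w)))
    (r a : ℝ) (hr : 0 < r) (ha : 0 < a)
    (hI6 : ∀ v : H, ‖v‖ = r → a ≤ J (v, 0))
    (hI7 : ∀ (t : ℕ → ℝ) (v : ℕ → H) (w : ℕ → W) (v₀ : H),
      Tendsto t atTop atTop → Tendsto v atTop (𝓝 v₀) → v₀ ≠ 0 →
      Tendsto (fun n => I (t n • ((v n, w n) : H × W)) / t n ^ 2) atTop atTop)
    (hI8 : ∀ u : H × W, u.1 ≠ 0 → fderiv ℝ J u u = 0 →
      (∀ w' : W, fderiv ℝ I u (0, w') = 0) →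
      ∀ t : ℝ, 0 ≤ t → ∀ w : W,
        (t ^ 2 - 1) / 2 * fderiv ℝ I u u + t * fderiv ℝ I u (0, w) + I u -
            I (t • u + (0, w)) ≤ 0)
    (m : H → H × W)
    (hm1 : ∀ v, (m v).1 = v)
    (hmM : ∀ v, ∀ w' : W, fderiv ℝ I (m v) (0, w') = 0)
    (hmmin : ∀ v w, I (m v) ≤ I (v, w))
    (hmuniq : ∀ (v : H) (w : W), (∀ w' : W, fderiv ℝ I (v, w) (0, w') = 0) → (v, w) = m v)
    (hmcont : Continuous m)
    (Jt : H → ℝ) (hJtdef : ∀ v, Jt v = J (m v))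
    (hJt' : ∀ v : H, HasFDerivAt Jt
      ((fderiv ℝ J (m v)).comp (ContinuousLinearMap.inl ℝ H W)) v)
    (Γ : Set (ℝ → H × W))
    (hΓ : Γ = {γ : ℝ → H × W | ContinuousOn γ (Set.Icc 0 1) ∧
      (∀ t ∈ Set.Icc (0:ℝ) 1, ∀ w' : W, fderiv ℝ I (γ t) (0, w') = 0) ∧
      γ 0 = 0 ∧ r < ‖(γ 1).1‖ ∧ J (γ 1) < 0})
    (c : ℝ) (hc : c = ⨅ γ : Γ, ⨆ t : Set.Icc (0:ℝ) 1, J (γ.1 t.1))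
    :
    c = sInf (J '' {u : H × W | u.1 ≠ 0 ∧ fderiv ℝ J u u = 0 ∧
      ∀ w' : W, fderiv ℝ I u (0, w') = 0}) := by

  obtain ⟨hI0, hInn⟩ := hI1
  have Idiff : Differentiable ℝ I := hIC1.differentiable one_ne_zero
  have Icont : Continuous I := Idiff.continuous
  have hJfun : J = fun u : H × W => 1 / 2 * ‖u.1‖ ^ 2 - I u := funext hJ
  have Jcont : Continuous J := by
    rw [hJfun]
    exact (continuous_const.mul ((continuous_norm.comp continuous_fst).pow 2)).sub Icont
  have hJder : ∀ u : H × W, HasFDerivAt J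
      (((innerSL ℝ u.1).comp (ContinuousLinearMap.fst ℝ H W)) - fderiv ℝ I u) u := by
    intro u
    have h1 : HasFDerivAt (fun p : H × W => ‖p.1‖ ^ 2)
        ((2 • innerSL ℝ u.1).comp (ContinuousLinearMap.fst ℝ H W)) u :=
      (hasStrictFDerivAt_norm_sq u.1).hasFDerivAt.comp u hasFDerivAt_fst
    have h2 := (h1.const_mul (1/2 : ℝ)).sub (Idiff u).hasFDerivAt
    have e : ((1/2 : ℝ) • (2 • innerSL ℝ u.1).comp (ContinuousLinearMap.fst ℝ H W)
        : H × W →L[ℝ] ℝ) = (innerSL ℝ u.1).comp (ContinuousLinearMap.fst ℝ H W) := by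
      refine ContinuousLinearMap.ext fun x => ?_
      simp [two_smul]
      ring
    rw [e] at h2
    rw [hJfun]
    exact h2
  have hJ0w : ∀ (u : H × W) (w : W), fderiv ℝ J u ((0 : H), w) = - fderiv ℝ I u (0, w) := by
    intro u w
    rw [(hJder u).fderiv]
    simp
  have hJuu : ∀ u : H × W, fderiv ℝ J u u = ‖u.1‖ ^ 2 - fderiv ℝ I u u := by
    intro u
    rw [(hJder u).fderiv]
    simp [real_inner_self_eq_norm_sq]
  have hm0 : m 0 = 0 := by
    have hmin : IsLocalMin I 0 := Filter.Eventually.of_forall fun u => by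
      rw [hI0]; exact hInn u
    have hf0 : fderiv ℝ I 0 = 0 := hmin.fderiv_eq_zero
    have h0' : ∀ w' : W, fderiv ℝ I ((0:H), (0:W)) (0, w') = 0 := by
      intro w'
      have e : ((0:H), (0:W)) = (0 : H × W) := rfl
      rw [e, hf0]; rfl
    have := hmuniq 0 0 h0'
    exact this.symm
  have Jtcont : Continuous Jt := by
    have e : Jt = J ∘ m := funext fun v => hJtdef v
    rw [e]; exact Jcont.comp hmcont
  have Jt0 : Jt 0 = 0 := by
    rw [hJtdef, hm0, hJ]
    simp [hI0]
  have hmem : ∀ u : H × W, (∀ w' : W, fderiv ℝ I u (0, w') = 0) → u = m u.1 :=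
    fun u hu => hmuniq u.1 u.2 hu
  have hφ' : ∀ (v : H) (s : ℝ),
      HasDerivAt (fun s : ℝ => Jt (s • v)) (fderiv ℝ J (m (s • v)) (v, 0)) s := by
    intro v s
    have h1 : HasDerivAt (fun s : ℝ => s • v) v s := by
      simpa using (hasDerivAt_id s).smul_const v
    have h2 := (hJt' (s • v)).comp_hasDerivAt s h1
    exact h2
  have lemB : ∀ v : H, v ≠ 0 → fderiv ℝ J (m v) (m v) = 0 →
      ∀ s : ℝ, 0 ≤ s → Jt (s • v) ≤ Jt v := by
    intro v hv hcrit s hs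
    have hu1 : (m v).1 = v := hm1 v
    have hIuu : fderiv ℝ I (m v) (m v) = ‖v‖ ^ 2 := by
      have h := hJuu (m v)
      rw [hcrit, hu1] at h
      linarith
    have h8 := hI8 (m v) (by rw [hu1]; exact hv) hcrit (hmM v) s hs
      ((m (s • v)).2 - s • (m v).2)
    have hw0 : fderiv ℝ I (m v) ((0:H), (m (s • v)).2 - s • (m v).2) = 0 := hmM v _
    have hsm : s • (m v) + ((0:H), (m (s • v)).2 - s • (m v).2) = m (s • v) := by
      ext
      · show s • (m v).1 + 0 = (m (s • v)).1
        rw [hm1, hm1, add_zero]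
      · show s • (m v).2 + ((m (s • v)).2 - s • (m v).2) = (m (s • v)).2
        abel
    rw [hsm, hw0, hIuu] at h8
    have e1 : Jt (s • v) = 1/2 * (s^2 * ‖v‖^2) - I (m (s • v)) := by
      rw [hJtdef, hJ, hm1, norm_smul, mul_pow, Real.norm_eq_abs, sq_abs]
    have e2 : Jt v = 1/2 * ‖v‖^2 - I (m v) := by
      rw [hJtdef, hJ, hm1]
    rw [e1, e2]
    nlinarith [h8]
  have lemA : ∀ v : H, ‖v‖ = r → a ≤ Jt v := by
    intro v hvr
    have h2 := hI6 v hvr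
    rw [hJ] at h2
    simp only [hvr] at h2
    have h3 := hmmin v 0
    rw [hJtdef, hJ, hm1, hvr]
    linarith
  have mkN : ∀ (v : H) (s₀ : ℝ), v ≠ 0 → 0 < s₀ →
      fderiv ℝ J (m (s₀ • v)) (v, 0) = 0 →
      (m (s₀ • v)).1 ≠ 0 ∧ fderiv ℝ J (m (s₀ • v)) (m (s₀ • v)) = 0 ∧
        ∀ w' : W, fderiv ℝ I (m (s₀ • v)) (0, w') = 0 := by
    intro v s₀ hv hs₀ hd
    refine ⟨by rw [hm1]; exact smul_ne_zero hs₀.ne' hv, ?_, hmM _⟩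
    have hdec : m (s₀ • v) = s₀ • ((v, (0:W)) : H × W) + ((0:H), (m (s₀ • v)).2) := by
      ext
      · show (m (s₀ • v)).1 = s₀ • v + 0
        rw [hm1, add_zero]
      · show (m (s₀ • v)).2 = s₀ • (0:W) + (m (s₀ • v)).2
        rw [smul_zero, zero_add]
    nth_rewrite 2 [hdec]
    rw [map_add, map_smul, hd, hJ0w]
    simp [hmM]
  have lemC : ∀ v : H, v ≠ 0 → ∃ T : ℝ, 1 ≤ T ∧ r < T * ‖v‖ ∧ Jt (T • v) < 0 := by
    intro v hv
    have h7 := hI7 (fun n : ℕ => (n : ℝ)) (fun _ => v)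
      (fun n => ((n : ℝ))⁻¹ • (m ((n : ℝ) • v)).2) v tendsto_natCast_atTop_atTop
      tendsto_const_nhds hv
    have heq : ∀ᶠ n : ℕ in atTop,
        I ((n:ℝ) • ((v, ((n : ℝ))⁻¹ • (m ((n : ℝ) • v)).2) : H × W)) / (n:ℝ)^2
          = I (m ((n:ℝ) • v)) / (n:ℝ)^2 := by
      filter_upwards [eventually_ge_atTop 1] with n hn
      have hn0 : ((n:ℝ)) ≠ 0 := by
        have : (0:ℝ) < n := by exact_mod_cast hn
        exact this.ne'
      congr 2
      ext
      · show (n:ℝ) • v = (m ((n:ℝ) • v)).1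
        rw [hm1]
      · show (n:ℝ) • (((n : ℝ))⁻¹ • (m ((n : ℝ) • v)).2) = (m ((n:ℝ) • v)).2
        rw [smul_smul, mul_inv_cancel₀ hn0, one_smul]
    have h7' : Tendsto (fun n : ℕ => I (m ((n:ℝ) • v)) / (n:ℝ)^2) atTop atTop :=
      h7.congr' heq
    have hmul : Tendsto (fun n : ℕ => (n:ℝ) * ‖v‖) atTop atTop :=
      tendsto_natCast_atTop_atTop.atTop_mul_const (norm_pos_iff.mpr hv)
    obtain ⟨n, hge, hn1, hnr⟩ := ((h7'.eventually_ge_atTop (1/2 * ‖v‖^2 + 1)).and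
      ((eventually_ge_atTop 1).and (hmul.eventually_gt_atTop r))).exists
    refine ⟨(n:ℝ), by exact_mod_cast hn1, hnr, ?_⟩
    have hnpos : (0:ℝ) < (n:ℝ) := by
      have : (1:ℕ) ≤ n := hn1
      exact_mod_cast Nat.lt_of_lt_of_le Nat.zero_lt_one this
    have hn2 : (0:ℝ) < (n:ℝ)^2 := by positivity
    have hIge : (1/2 * ‖v‖^2 + 1) * (n:ℝ)^2 ≤ I (m ((n:ℝ) • v)) := by
      rw [← le_div_iff₀ hn2]
      exact hge
    have e1 : Jt ((n:ℝ) • v) = 1/2 * ((n:ℝ)^2 * ‖v‖^2) - I (m ((n:ℝ) • v)) := by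
      rw [hJtdef, hJ, hm1, norm_smul, mul_pow, Real.norm_eq_abs, sq_abs]
    rw [e1]
    nlinarith [hIge, hn2]
  set Nset : Set (H × W) := {u : H × W | u.1 ≠ 0 ∧ fderiv ℝ J u u = 0 ∧
      ∀ w' : W, fderiv ℝ I u (0, w') = 0} with hNset
  have hNlow : ∀ u ∈ Nset, a ≤ J u := by
    intro u hu
    obtain ⟨hu1, hcrit, huM⟩ := hu
    have humem : u = m u.1 := hmem u huM
    have hnv : 0 < ‖u.1‖ := norm_pos_iff.mpr hu1
    have hcrit' : fderiv ℝ J (m u.1) (m u.1) = 0 := by rw [← humem]; exact hcrit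
    have h1 := lemB u.1 hu1 hcrit' (r / ‖u.1‖) (le_of_lt (div_pos hr hnv))
    have h2 := lemA ((r / ‖u.1‖) • u.1) (by
      rw [norm_smul, Real.norm_eq_abs, abs_of_pos (div_pos hr hnv)]
      field_simp)
    have h3 : Jt u.1 = J u := by rw [hJtdef, ← humem]
    linarith
  have P1 : ∀ u ∈ Nset, ∃ γ ∈ Γ, ∀ t ∈ Set.Icc (0:ℝ) 1, J (γ t) ≤ J u := by
    intro u hu
    obtain ⟨hu1, hucrit, huM⟩ := hu
    have humem : u = m u.1 := hmem u huM
    obtain ⟨T, hT1, hTr, hTneg⟩ := lemC u.1 hu1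
    have hTpos : (0:ℝ) < T := lt_of_lt_of_le zero_lt_one hT1
    refine ⟨fun t => m ((t * T) • u.1), ?_, ?_⟩
    · rw [hΓ]
      refine ⟨?_, fun t _ w' => hmM _ w', ?_, ?_, ?_⟩
      · exact (hmcont.comp ((continuous_id.mul continuous_const).smul
          continuous_const)).continuousOn
      · show m ((0 * T) • u.1) = 0
        rw [zero_mul, zero_smul, hm0]
      · show r < ‖(m ((1 * T) • u.1)).1‖
        rw [hm1, one_mul, norm_smul, Real.norm_eq_abs, abs_of_pos hTpos]
        exact hTr
      · show J (m ((1 * T) • u.1)) < 0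
        rw [← hJtdef, one_mul]
        exact hTneg
    · intro t ht
      have hcrit' : fderiv ℝ J (m u.1) (m u.1) = 0 := by rw [← humem]; exact hucrit
      have hle := lemB u.1 hu1 hcrit' (t * T) (mul_nonneg ht.1 hTpos.le)
      have h3 : Jt u.1 = J u := by rw [hJtdef, ← humem]
      show J (m ((t * T) • u.1)) ≤ J u
      rw [← hJtdef]
      linarith
  have P2 : ∀ γ ∈ Γ, ∃ t ∈ Set.Icc (0:ℝ) 1, γ t ∈ Nset := by
    intro γ hγ
    rw [hΓ] at hγ
    obtain ⟨hcont, hMm, h0, hr1, hJ1⟩ := hγ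
    by_contra hno
    push_neg at hno
    haveI : PreconnectedSpace (Set.Icc (0:ℝ) 1) := Subtype.preconnectedSpace isPreconnected_Icc
    set σ : Set.Icc (0:ℝ) 1 → H := fun t => (γ t.1).1 with hσdef
    have hσcont : Continuous σ :=
      continuous_fst.comp (continuousOn_iff_continuous_restrict.mp hcont)
    have hγm : ∀ t : Set.Icc (0:ℝ) 1, γ t.1 = m (σ t) := fun t => hmem _ (hMm t.1 t.2)
    set A : Set (Set.Icc (0:ℝ) 1) :=
      {t | ‖σ t‖ < r ∧ Jt (σ t) < a} ∪
        ⋃ s ∈ Set.Ioi (1:ℝ), {t | Jt (σ t) < Jt (s • σ t)} with hA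
    set B : Set (Set.Icc (0:ℝ) 1) :=
      ⋃ s ∈ Set.Ioo (0:ℝ) 1, {t | Jt (σ t) < Jt (s • σ t)} with hB
    have hAo : IsOpen A := by
      apply IsOpen.union
      · exact (isOpen_lt hσcont.norm continuous_const).inter
          (isOpen_lt (Jtcont.comp hσcont) continuous_const)
      · exact isOpen_biUnion fun s _ =>
          isOpen_lt (Jtcont.comp hσcont) (Jtcont.comp (hσcont.const_smul s))
    have hBo : IsOpen B := isOpen_biUnion fun s _ =>
      isOpen_lt (Jtcont.comp hσcont) (Jtcont.comp (hσcont.const_smul s))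
    have hcover : Set.univ ⊆ A ∪ B := by
      intro t _
      by_cases hz : σ t = 0
      · left; left
        show ‖σ t‖ < r ∧ Jt (σ t) < a
        rw [hz, norm_zero, Jt0]
        exact ⟨hr, ha⟩
      · have hd := hφ' (σ t) 1
        rcases lt_trichotomy (fderiv ℝ J (m ((1:ℝ) • σ t)) (σ t, 0)) 0 with hneg | hzero | hpos
        · right
          obtain ⟨s, hs0, hs1, hlt⟩ := slope_left12 hd hneg
          refine Set.mem_biUnion (⟨hs0, hs1⟩ : s ∈ Set.Ioo (0:ℝ) 1) ?_
          show Jt (σ t) < Jt (s • σ t)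
          simpa using hlt
        · exfalso
          have hmm' := mkN (σ t) 1 hz one_pos hzero
          rw [one_smul] at hmm'
          exact hno t.1 t.2 (by rw [hγm t]; exact hmm')
        · left; right
          obtain ⟨s, hs1, hlt⟩ := slope_right12 hd hpos
          refine Set.mem_biUnion (hs1 : s ∈ Set.Ioi (1:ℝ)) ?_
          show Jt (σ t) < Jt (s • σ t)
          simpa using hlt
    have hAne : (Set.univ ∩ A).Nonempty := by
      refine ⟨⟨0, by norm_num⟩, Set.mem_univ _, Or.inl ?_⟩
      have hz : σ ⟨0, by norm_num⟩ = 0 := by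
        show (γ (0:ℝ)).1 = 0
        rw [h0]; rfl
      show ‖σ _‖ < r ∧ Jt (σ _) < a
      rw [hz, norm_zero, Jt0]
      exact ⟨hr, ha⟩
    have hBne : (Set.univ ∩ B).Nonempty := by
      refine ⟨⟨1, by norm_num⟩, Set.mem_univ _, ?_⟩
      have hσ1 : σ ⟨1, by norm_num⟩ = (γ 1).1 := rfl
      have hpos : 0 < ‖(γ 1).1‖ := lt_trans hr hr1
      refine Set.mem_biUnion
        (⟨div_pos hr hpos, (div_lt_one hpos).mpr hr1⟩ :
          r / ‖(γ 1).1‖ ∈ Set.Ioo (0:ℝ) 1) ?_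
      show Jt (σ ⟨1, by norm_num⟩) < Jt ((r / ‖(γ 1).1‖) • σ ⟨1, by norm_num⟩)
      have h1 : Jt (σ ⟨1, by norm_num⟩) = J (γ 1) := by
        rw [hσ1, hJtdef, ← hγm ⟨1, by norm_num⟩]
      have h2 : a ≤ Jt ((r / ‖(γ 1).1‖) • σ ⟨1, by norm_num⟩) := by
        apply lemA
        rw [hσ1, norm_smul, Real.norm_eq_abs, abs_of_pos (div_pos hr hpos)]
        field_simp
      rw [h1]
      linarith
    obtain ⟨t, -, htA, htB⟩ := isPreconnected_univ A B hAo hBo hcover hAne hBne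
    set v := σ t with hvdef
    obtain ⟨s₁, hs₁mem, hlt₁⟩ := Set.mem_iUnion₂.mp htB
    have hlt₁' : Jt v < Jt (s₁ • v) := hlt₁
    have hvz : v ≠ 0 := by
      intro hz
      have h := hlt₁'
      rw [hz, smul_zero] at h
      exact lt_irrefl _ h
    have hs₂ : ∃ s₂ : ℝ, 1 < s₂ ∧ Jt v < Jt (s₂ • v) := by
      rcases htA with ⟨hnr, hna⟩ | hA2
      · have hnv : 0 < ‖v‖ := norm_pos_iff.mpr hvz
        refine ⟨r / ‖v‖, (one_lt_div hnv).mpr hnr, ?_⟩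
        have := lemA ((r / ‖v‖) • v) (by
          rw [norm_smul, Real.norm_eq_abs, abs_of_pos (div_pos hr hnv)]
          field_simp)
        have hna' : Jt v < a := hna
        linarith
      · obtain ⟨s₂, hs₂mem, h⟩ := Set.mem_iUnion₂.mp hA2
        exact ⟨s₂, hs₂mem, h⟩
    obtain ⟨s₂, hs₂1, hlt₂⟩ := hs₂
    have hs₁s₂ : s₁ < s₂ := lt_trans hs₁mem.2 hs₂1
    have hcφ : ContinuousOn (fun s : ℝ => Jt (s • v)) (Set.Icc s₁ s₂) :=
      (Jtcont.comp (continuous_id.smul continuous_const)).continuousOn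
    obtain ⟨s₀, hs₀mem, hs₀min⟩ :=
      isCompact_Icc.exists_isMinOn (Set.nonempty_Icc.mpr hs₁s₂.le) hcφ
    have h1mem : (1:ℝ) ∈ Set.Icc s₁ s₂ := ⟨hs₁mem.2.le, hs₂1.le⟩
    have hmin1 : Jt (s₀ • v) ≤ Jt v := by
      have := hs₀min h1mem
      simpa using this
    have hs₀in : s₀ ∈ Set.Ioo s₁ s₂ := by
      constructor
      · rcases lt_or_eq_of_le hs₀mem.1 with h | h
        · exact h
        · exfalso; rw [← h] at hmin1; linarith
      · rcases lt_or_eq_of_le hs₀mem.2 with h | h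
        · exact h
        · exfalso; rw [h] at hmin1; linarith
    have hloc : IsLocalMin (fun s : ℝ => Jt (s • v)) s₀ :=
      hs₀min.isLocalMin (Icc_mem_nhds hs₀in.1 hs₀in.2)
    have hd0 := hloc.hasDerivAt_eq_zero (hφ' v s₀)
    have hs₀pos : 0 < s₀ := lt_trans hs₁mem.1 hs₀in.1
    have hNmem := mkN v s₀ hvz hs₀pos hd0
    have hlemB := lemB (s₀ • v) (by rw [← hm1 (s₀ • v)]; exact hNmem.1) hNmem.2.1
      (s₁ / s₀) (le_of_lt (div_pos hs₁mem.1 hs₀pos))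
    rw [smul_smul, div_mul_cancel₀ _ hs₀pos.ne'] at hlemB
    linarith
  haveI hIccne : Nonempty (Set.Icc (0:ℝ) 1) := ⟨⟨0, by norm_num⟩⟩
  have hba : ∀ γ, γ ∈ Γ → BddAbove (Set.range fun t : Set.Icc (0:ℝ) 1 => J (γ t.1)) := by
    intro γ hγ
    rw [hΓ] at hγ
    rw [← Set.image_eq_range (fun x => J (γ x)) (Set.Icc (0:ℝ) 1)]
    exact (isCompact_Icc.image_of_continuousOn (Jcont.comp_continuousOn hγ.1)).bddAbove
  have hsup : ∀ γ, γ ∈ Γ → ∃ u ∈ Nset, J u ≤ ⨆ t : Set.Icc (0:ℝ) 1, J (γ t.1) := by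
    intro γ hγ
    obtain ⟨t, ht, htm⟩ := P2 γ hγ
    exact ⟨γ t, htm, le_ciSup (hba γ hγ) ⟨t, ht⟩⟩
  by_cases hN : Nset.Nonempty
  · obtain ⟨u₀, hu₀⟩ := hN
    obtain ⟨γ₀, hγ₀, -⟩ := P1 u₀ hu₀
    haveI hΓne : Nonempty ↥Γ := ⟨⟨γ₀, hγ₀⟩⟩
    have hbb : BddBelow (Set.range fun γ : ↥Γ => ⨆ t : Set.Icc (0:ℝ) 1, J (γ.1 t.1)) := by
      refine ⟨a, ?_⟩
      rintro x ⟨γ, rfl⟩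
      obtain ⟨u, hu, hle⟩ := hsup γ.1 γ.2
      exact le_trans (hNlow u hu) hle
    have hJbb : BddBelow (J '' Nset) := by
      refine ⟨a, ?_⟩
      rintro x ⟨u, hu, rfl⟩
      exact hNlow u hu
    apply le_antisymm
    · apply le_csInf ⟨J u₀, Set.mem_image_of_mem J hu₀⟩
      rintro b ⟨u, hu, rfl⟩
      obtain ⟨γu, hγu, hle⟩ := P1 u hu
      rw [hc]
      refine le_trans (ciInf_le hbb ⟨γu, hγu⟩) ?_
      exact ciSup_le fun t => hle t.1 t.2
    · rw [hc]
      apply le_ciInf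
      rintro ⟨γ, hγ⟩
      obtain ⟨u, hu, hle⟩ := hsup γ hγ
      exact le_trans (csInf_le hJbb (Set.mem_image_of_mem J hu)) hle
  · have hNe : Nset = ∅ := Set.not_nonempty_iff_eq_empty.mp hN
    have hΓe : Γ = ∅ := by
      rw [Set.eq_empty_iff_forall_notMem]
      intro γ hγ
      obtain ⟨t, -, htm⟩ := P2 γ hγ
      rw [hNe] at htm
      exact htm
    rw [hNe, Set.image_empty, Real.sInf_empty, hc]
    haveI : IsEmpty ↥Γ := by
      rw [hΓe]
      exact Set.isEmpty_coe_sort.mpr rfl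
    exact Real.iInf_of_isEmpty _
end
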